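/- The golden ratio α = (1+√5)/2 satisfies ⌊(⌊nα⌋+1)α⌋ = ⌊nα²⌋ + 1 for all integers n. -/
import Mathlib


theorem stmt_0 (α : ℝ) (hα : α = (1 + Real.sqrt 5) / 2) :
    ∀ n : ℤ, ⌊((⌊(n : ℝ) * α⌋ : ℝ) + 1) * α⌋ = ⌊(n : ℝ) * α ^ 2⌋ + 1 := by
  intro n
  have h5 : Real.sqrt 5 ^ 2 = 5 := Real.sq_sqrt (by norm_num)
  have h5lb : (2:ℝ) < Real.sqrt 5 := by nlinarith [Real.sqrt_nonneg 5]
  have hα1 : (1:ℝ) < α := by rw [hα]; nlinarith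
  have hαsq : α ^ 2 = α + 1 := by rw [hα]; nlinarith
  set m := ⌊(n : ℝ) * α⌋ with hm
  have hm1 : (m : ℝ) ≤ (n : ℝ) * α := Int.floor_le _
  have hm2 : (n : ℝ) * α < (m : ℝ) + 1 := Int.lt_floor_add_one _
  have hr : (n : ℝ) * α ^ 2 = (n : ℝ) * α + (n : ℤ) := by
    rw [hαsq]; ring
  rw [hr, Int.floor_add_intCast, ← hm]
  have hfloor : ⌊((m : ℝ) + 1) * α⌋ = m + n + 1 := by
    rw [Int.floor_eq_iff]
    constructor
    · push_cast
      nlinarith [mul_pos (lt_trans one_pos hα1) (sub_pos.mpr hm2)]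
    · push_cast
      nlinarith [mul_pos (lt_trans one_pos hα1)
        (show (0:ℝ) < (n:ℝ) * α + α - (m:ℝ) - 1 by nlinarith)]
  omega
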